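/- arXiv:1010.2475 — 2 statements merged into one kernel-verified Lean document; each statement's English description precedes it below -/
import Mathlib

section
/- For every λ > 0 and every b ∈ ℝ² \ {0}, the convolution identity ∫_{ℝ²} V₀₀(x + b; λ) φ₀₀(x; λ) dx = V₀₀(b; √2 λ) holds, i.e. the average of the Lamb–Oseen velocity field with core size λ against a Gaussian of core size λ equals the Lamb–Oseen velocity field with core size √2 λ evaluated at the displacement b. -/
open MeasureTheory Real

/-- first partial derivative `∂_{x₁}` of a function on `ℝ²`. -/
noncomputable def pd1 (f : ℝ × ℝ → ℝ) : ℝ × ℝ → ℝ := fun x => deriv (fun s => f (s, x.2)) x.1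

/-- second partial derivative `∂_{x₂}` of a function on `ℝ²`. -/
noncomputable def pd2 (f : ℝ × ℝ → ℝ) : ℝ × ℝ → ℝ := fun x => deriv (fun s => f (x.1, s)) x.2

/-- mixed partial derivative `∂^{k₁}_{x₁} ∂^{k₂}_{x₂}`. -/
noncomputable def md (k1 k2 : ℕ) (f : ℝ × ℝ → ℝ) : ℝ × ℝ → ℝ := pd1^[k1] (pd2^[k2] f)

/-- the Gaussian vorticity `φ₀₀(x;λ) = (1/(πλ²)) exp(−|x|²/λ²)`. -/
noncomputable def phi00 (lam : ℝ) (x : ℝ × ℝ) : ℝ :=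
  (1 / (π * lam ^ 2)) * Real.exp (-(x.1 ^ 2 + x.2 ^ 2) / lam ^ 2)

/-- first component of the Lamb–Oseen velocity field `V₀₀(x;λ)`. -/
noncomputable def V001 (lam : ℝ) (x : ℝ × ℝ) : ℝ :=
  (1 / (2 * π)) * (-x.2 / (x.1 ^ 2 + x.2 ^ 2)) * (1 - Real.exp (-(x.1 ^ 2 + x.2 ^ 2) / lam ^ 2))

/-- second component of the Lamb–Oseen velocity field `V₀₀(x;λ)`. -/
noncomputable def V002 (lam : ℝ) (x : ℝ × ℝ) : ℝ :=
  (1 / (2 * π)) * (x.1 / (x.1 ^ 2 + x.2 ^ 2)) * (1 - Real.exp (-(x.1 ^ 2 + x.2 ^ 2) / lam ^ 2))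

/-- two-dimensional Hermite polynomial `H_{n₁,n₂}(z;λ)` defined via the generating function. -/
noncomputable def hpoly (lam : ℝ) (n1 n2 : ℕ) (z : ℝ × ℝ) : ℝ :=
  md n1 n2 (fun τ => Real.exp ((2 * (τ.1 * z.1 + τ.2 * z.2) - (τ.1 ^ 2 + τ.2 ^ 2)) / lam ^ 2)) (0, 0)

/-- Hermite function `φ_{k₁,k₂}(x;λ) = ∂^{k₁}_{x₁} ∂^{k₂}_{x₂} φ₀₀(x;λ)`. -/
noncomputable def hfun (lam : ℝ) (k1 k2 : ℕ) : ℝ × ℝ → ℝ := md k1 k2 (phi00 lam)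

section Aux
open Set

lemma gauss_shift {k : ℝ} (hk : 0 < k) (c : ℝ) :
    ∫ x : ℝ, Real.exp (-(k * (x + c) ^ 2)) = Real.sqrt (π / k) := by
  have h : (fun x : ℝ => Real.exp (-(k * (x + c) ^ 2)))
      = fun x : ℝ => (fun y : ℝ => Real.exp (-k * y ^ 2)) (x + c) := by
    funext x; simp [neg_mul]
  rw [h, integral_add_right_eq_self (μ := volume) (fun y : ℝ => Real.exp (-k * y ^ 2)) c]
  exact integral_gaussian k

lemma gauss_odd (k c : ℝ) :
    ∫ x : ℝ, (x + c) * Real.exp (-(k * (x + c) ^ 2)) = 0 := by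
  have h : (fun x : ℝ => (x + c) * Real.exp (-(k * (x + c) ^ 2)))
      = fun x : ℝ => (fun y : ℝ => y * Real.exp (-(k * y ^ 2))) (x + c) := by
    funext x; ring_nf
  rw [h, integral_add_right_eq_self (μ := volume) (fun y : ℝ => y * Real.exp (-(k * y ^ 2))) c]
  have h2 := MeasureTheory.integral_neg_eq_self (fun y : ℝ => y * Real.exp (-(k * y ^ 2))) volume
  simp only [neg_sq, neg_mul] at h2
  rw [integral_neg] at h2
  linarith

lemma int_shift_gauss {k : ℝ} (hk : 0 < k) (c : ℝ) :
    Integrable (fun x : ℝ => Real.exp (-(k * (x + c) ^ 2))) := by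
  have h : (fun x : ℝ => Real.exp (-(k * (x + c) ^ 2)))
      = fun x : ℝ => (fun y : ℝ => Real.exp (-k * y ^ 2)) (x + c) := by
    funext x; simp [neg_mul]
  rw [h]
  exact (integrable_exp_neg_mul_sq hk).comp_add_right c

lemma int_shift_lin_gauss {k : ℝ} (hk : 0 < k) (c : ℝ) :
    Integrable (fun x : ℝ => (x + c) * Real.exp (-(k * (x + c) ^ 2))) := by
  have h : (fun x : ℝ => (x + c) * Real.exp (-(k * (x + c) ^ 2)))
      = fun x : ℝ => (fun y : ℝ => y * Real.exp (-k * y ^ 2)) (x + c) := by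
    funext x; simp [neg_mul]
  rw [h]
  exact (integrable_mul_exp_neg_mul_sq hk).comp_add_right c

lemma oneD_A {a t : ℝ} (ha : 0 < a) (ht : 0 ≤ t) (β : ℝ) :
    ∫ x : ℝ, Real.exp (-(t * (x + β) ^ 2 + a * x ^ 2))
      = Real.sqrt (π / (a + t)) * Real.exp (-(a * t / (a + t) * β ^ 2)) := by
  have hat : (0:ℝ) < a + t := by linarith
  have key : ∀ x : ℝ, -(t * (x + β) ^ 2 + a * x ^ 2)
      = -(a * t / (a + t) * β ^ 2) + -((a + t) * (x + t * β / (a + t)) ^ 2) := by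
    intro x; field_simp; ring
  have h : (fun x : ℝ => Real.exp (-(t * (x + β) ^ 2 + a * x ^ 2)))
      = fun x : ℝ => Real.exp (-(a * t / (a + t) * β ^ 2)) *
          Real.exp (-((a + t) * (x + t * β / (a + t)) ^ 2)) := by
    funext x; rw [← Real.exp_add, ← key x]
  rw [h, MeasureTheory.integral_const_mul, gauss_shift hat, mul_comm]

lemma oneD_B {a t : ℝ} (ha : 0 < a) (ht : 0 ≤ t) (β : ℝ) :
    ∫ x : ℝ, (x + β) * Real.exp (-(t * (x + β) ^ 2 + a * x ^ 2))
      = a * β / (a + t) * (Real.sqrt (π / (a + t)) * Real.exp (-(a * t / (a + t) * β ^ 2))) := by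
  have hat : (0:ℝ) < a + t := by linarith
  set c := t * β / (a + t) with hc
  set K := Real.exp (-(a * t / (a + t) * β ^ 2)) with hK
  have key : ∀ x : ℝ, -(t * (x + β) ^ 2 + a * x ^ 2)
      = -(a * t / (a + t) * β ^ 2) + -((a + t) * (x + c) ^ 2) := by
    intro x; rw [hc]; field_simp; ring
  have hβ : β = c + a * β / (a + t) := by rw [hc]; field_simp; ring
  have h : (fun x : ℝ => (x + β) * Real.exp (-(t * (x + β) ^ 2 + a * x ^ 2)))
      = fun x : ℝ => K * ((x + c) * Real.exp (-((a + t) * (x + c) ^ 2)))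
          + (K * (a * β / (a + t))) * Real.exp (-((a + t) * (x + c) ^ 2)) := by
    funext x
    rw [key x, Real.exp_add, ← hK]
    have hx : x + β = (x + c) + a * β / (a + t) := by
      rw [hc]; field_simp; ring
    rw [hx]
    ring
  rw [h, integral_add (((int_shift_lin_gauss hat c).const_mul K))
      ((int_shift_gauss hat c).const_mul _),
    MeasureTheory.integral_const_mul, MeasureTheory.integral_const_mul,
    gauss_odd, gauss_shift hat]
  ring

lemma twoD {a t : ℝ} (ha : 0 < a) (ht : 0 ≤ t) (b1 b2 : ℝ) :
    ∫ x : ℝ × ℝ, (x.2 + b2) *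
        Real.exp (-(t * ((x.1 + b1) ^ 2 + (x.2 + b2) ^ 2) + a * (x.1 ^ 2 + x.2 ^ 2)))
      = π * a * b2 / (a + t) ^ 2 * Real.exp (-(a * t / (a + t) * (b1 ^ 2 + b2 ^ 2))) := by
  have hat : (0:ℝ) < a + t := by linarith
  have h : (fun x : ℝ × ℝ => (x.2 + b2) *
        Real.exp (-(t * ((x.1 + b1) ^ 2 + (x.2 + b2) ^ 2) + a * (x.1 ^ 2 + x.2 ^ 2))))
      = fun x : ℝ × ℝ => (fun u : ℝ => Real.exp (-(t * (u + b1) ^ 2 + a * u ^ 2))) x.1 *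
          (fun v : ℝ => (v + b2) * Real.exp (-(t * (v + b2) ^ 2 + a * v ^ 2))) x.2 := by
    funext x
    have harg : -(t * ((x.1 + b1) ^ 2 + (x.2 + b2) ^ 2) + a * (x.1 ^ 2 + x.2 ^ 2))
        = -(t * (x.1 + b1) ^ 2 + a * x.1 ^ 2) + -(t * (x.2 + b2) ^ 2 + a * x.2 ^ 2) := by ring
    rw [harg, Real.exp_add]; ring
  rw [h, MeasureTheory.Measure.volume_eq_prod,
    MeasureTheory.integral_prod_mul (fun u : ℝ => Real.exp (-(t * (u + b1) ^ 2 + a * u ^ 2)))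
      (fun v : ℝ => (v + b2) * Real.exp (-(t * (v + b2) ^ 2 + a * v ^ 2))),
    oneD_A ha ht b1, oneD_B ha ht b2]
  rw [show -(a * t / (a + t) * (b1 ^ 2 + b2 ^ 2))
      = -(a * t / (a + t) * b1 ^ 2) + -(a * t / (a + t) * b2 ^ 2) from by ring, Real.exp_add]
  have hsq : Real.sqrt (π / (a + t)) * Real.sqrt (π / (a + t)) = π / (a + t) :=
    Real.mul_self_sqrt (by positivity)
  calc Real.sqrt (π / (a + t)) * Real.exp (-(a * t / (a + t) * b1 ^ 2)) *
        (a * b2 / (a + t) * (Real.sqrt (π / (a + t)) * Real.exp (-(a * t / (a + t) * b2 ^ 2))))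
      = Real.sqrt (π / (a + t)) * Real.sqrt (π / (a + t)) * (a * b2 / (a + t)) *
        (Real.exp (-(a * t / (a + t) * b1 ^ 2)) * Real.exp (-(a * t / (a + t) * b2 ^ 2))) := by
        ring
    _ = π / (a + t) * (a * b2 / (a + t)) *
        (Real.exp (-(a * t / (a + t) * b1 ^ 2)) * Real.exp (-(a * t / (a + t) * b2 ^ 2))) := by
        rw [hsq]
    _ = π * a * b2 / (a + t) ^ 2 *
        (Real.exp (-(a * t / (a + t) * b1 ^ 2)) * Real.exp (-(a * t / (a + t) * b2 ^ 2))) := by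
        field_simp

lemma expint {s : ℝ} (hs : s ≠ 0) (c : ℝ) :
    ∫ u in (0:ℝ)..c, Real.exp (-(s * u)) = (1 - Real.exp (-(s * c))) / s := by
  have h : (fun u : ℝ => Real.exp (-(s * u))) = fun u : ℝ => Real.exp (u * -s) := by
    funext u; ring_nf
  rw [h, intervalIntegral.integral_comp_mul_right Real.exp (neg_ne_zero.mpr hs),
    integral_exp]
  rw [smul_eq_mul]
  rw [show c * -s = -(s * c) from by ring, show (0:ℝ) * -s = 0 from by ring, Real.exp_zero]
  rw [inv_neg, div_eq_inv_mul]
  ring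

lemma trep {s : ℝ} (hs : 0 < s) {a : ℝ} (ha : 0 ≤ a) :
    ∫ t in Ioc (0:ℝ) a, Real.exp (-(s * t)) = (1 - Real.exp (-(s * a))) / s := by
  rw [← intervalIntegral.integral_of_le ha, expint hs.ne']

lemma outer {a r : ℝ} (ha : 0 < a) (hr : 0 < r) :
    ∫ t in Ioc (0:ℝ) a, a ^ 2 / (a + t) ^ 2 * Real.exp (-(a * t / (a + t) * r))
      = (1 - Real.exp (-(a * r / 2))) / r := by
  rw [← intervalIntegral.integral_of_le ha.le]
  have huIcc : uIcc (0:ℝ) a = Icc 0 a := uIcc_of_le ha.le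
  have hne : ∀ t ∈ uIcc (0:ℝ) a, a + t ≠ 0 := by
    intro t ht
    rw [huIcc, mem_Icc] at ht
    linarith [ht.1]
  have hder : ∀ t ∈ uIcc (0:ℝ) a,
      HasDerivAt (fun t : ℝ => a * t / (a + t)) (a ^ 2 / (a + t) ^ 2) t := by
    intro t ht
    have h1 : HasDerivAt (fun t : ℝ => a * t) a t := by
      simpa using (hasDerivAt_id t).const_mul a
    have h2 : HasDerivAt (fun t : ℝ => a + t) 1 t := by
      simpa using (hasDerivAt_id t).const_add a
    have : HasDerivAt (fun t : ℝ => a * t / (a + t)) ((a * (a + t) - a * t * 1) / (a + t) ^ 2) t :=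
      h1.div h2 (hne t ht)
    convert this using 1
    ring
  have hcont : ContinuousOn (fun t : ℝ => a ^ 2 / (a + t) ^ 2) (uIcc (0:ℝ) a) := by
    apply ContinuousOn.div continuousOn_const (by fun_prop)
    intro t ht
    exact pow_ne_zero 2 (hne t ht)
  have hg : Continuous (fun u : ℝ => Real.exp (-(u * r))) := by fun_prop
  have key := intervalIntegral.integral_comp_smul_deriv hder hcont hg
  simp only [smul_eq_mul, Function.comp] at key
  have harg : (fun t : ℝ => a ^ 2 / (a + t) ^ 2 * Real.exp (-(a * t / (a + t) * r)))
      = fun t : ℝ => a ^ 2 / (a + t) ^ 2 * Real.exp (-(a * t / (a + t) * r)) := rfl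
  rw [show (∫ t in (0:ℝ)..a, a ^ 2 / (a + t) ^ 2 * Real.exp (-(a * t / (a + t) * r)))
      = ∫ u in (a * 0 / (a + 0))..(a * a / (a + a)), Real.exp (-(u * r)) from key]
  rw [show a * 0 / (a + 0) = (0:ℝ) from by simp, show a * a / (a + a) = a / 2 from by
    rw [show a + a = a * 2 from by ring]; rw [mul_div_assoc]; field_simp]
  have h : (fun u : ℝ => Real.exp (-(u * r))) = fun u : ℝ => Real.exp (-(r * u)) := by
    funext u; ring_nf
  rw [h] at *
  rw [expint hr.ne' (a/2), show r * (a / 2) = a * r / 2 from by ring]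

lemma G_integrable {a : ℝ} (ha : 0 < a) (b1 b2 : ℝ) :
    Integrable (fun z : (ℝ × ℝ) × ℝ => (z.1.2 + b2) *
      Real.exp (-(z.2 * ((z.1.1 + b1) ^ 2 + (z.1.2 + b2) ^ 2) + a * (z.1.1 ^ 2 + z.1.2 ^ 2))))
      ((volume : Measure (ℝ × ℝ)).prod (volume.restrict (Ioc 0 a))) := by
  have h1 : Integrable (fun y : ℝ => Real.exp (-(a * y ^ 2))) := by
    simpa [neg_mul] using integrable_exp_neg_mul_sq ha
  have habs : Integrable (fun y : ℝ => |y| * Real.exp (-(a * y ^ 2))) := by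
    have := (integrable_mul_exp_neg_mul_sq ha).abs
    simpa [abs_mul, abs_of_pos (Real.exp_pos _), neg_mul] using this
  have h2 : Integrable (fun y : ℝ => (|y| + |b2|) * Real.exp (-(a * y ^ 2))) := by
    simpa [add_mul] using (habs.add (h1.const_mul |b2|) :
      Integrable (fun y : ℝ => |y| * Real.exp (-(a * y ^ 2)) + |b2| * Real.exp (-(a * y ^ 2))))
  have hH : Integrable (fun x : ℝ × ℝ =>
      Real.exp (-(a * x.1 ^ 2)) * ((|x.2| + |b2|) * Real.exp (-(a * x.2 ^ 2)))) volume := by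
    rw [MeasureTheory.Measure.volume_eq_prod]
    exact h1.mul_prod h2
  have hν : Integrable (fun _ : ℝ => (1:ℝ)) (volume.restrict (Ioc 0 a)) := by
    rw [integrable_const_iff]
    right
    rw [isFiniteMeasure_restrict]
    exact measure_Ioc_lt_top.ne
  have hHprod : Integrable (fun z : (ℝ × ℝ) × ℝ =>
      (Real.exp (-(a * z.1.1 ^ 2)) * ((|z.1.2| + |b2|) * Real.exp (-(a * z.1.2 ^ 2)))) * 1)
      ((volume : Measure (ℝ × ℝ)).prod (volume.restrict (Ioc 0 a))) :=
    hH.mul_prod hν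
  have hmeas : Continuous (fun z : (ℝ × ℝ) × ℝ => (z.1.2 + b2) *
      Real.exp (-(z.2 * ((z.1.1 + b1) ^ 2 + (z.1.2 + b2) ^ 2) + a * (z.1.1 ^ 2 + z.1.2 ^ 2)))) := by
    fun_prop
  apply Integrable.mono' hHprod hmeas.aestronglyMeasurable
  have hset : (volume : Measure (ℝ × ℝ)).prod (volume.restrict (Ioc 0 a))
      = ((volume : Measure (ℝ × ℝ)).prod volume).restrict (univ ×ˢ Ioc 0 a) := by
    rw [← MeasureTheory.Measure.prod_restrict, Measure.restrict_univ]
  rw [hset]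
  filter_upwards [ae_restrict_mem (MeasurableSet.univ.prod measurableSet_Ioc)] with z hz
  have ht : z.2 ∈ Ioc (0:ℝ) a := hz.2
  have hSnn : (0:ℝ) ≤ (z.1.1 + b1) ^ 2 + (z.1.2 + b2) ^ 2 := by positivity
  have htS : 0 ≤ z.2 * ((z.1.1 + b1) ^ 2 + (z.1.2 + b2) ^ 2) := mul_nonneg ht.1.le hSnn
  have hexple : Real.exp (-(z.2 * ((z.1.1 + b1) ^ 2 + (z.1.2 + b2) ^ 2)
        + a * (z.1.1 ^ 2 + z.1.2 ^ 2)))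
      ≤ Real.exp (-(a * (z.1.1 ^ 2 + z.1.2 ^ 2))) := by
    apply Real.exp_le_exp.mpr
    linarith
  rw [Real.norm_eq_abs, abs_mul, Real.abs_exp]
  calc |z.1.2 + b2| * Real.exp (-(z.2 * ((z.1.1 + b1) ^ 2 + (z.1.2 + b2) ^ 2)
        + a * (z.1.1 ^ 2 + z.1.2 ^ 2)))
      ≤ (|z.1.2| + |b2|) * Real.exp (-(a * (z.1.1 ^ 2 + z.1.2 ^ 2))) :=
        mul_le_mul (abs_add_le _ _) hexple (Real.exp_pos _).le (by positivity)
    _ = (Real.exp (-(a * z.1.1 ^ 2)) * ((|z.1.2| + |b2|) * Real.exp (-(a * z.1.2 ^ 2)))) * 1 := by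
        rw [show -(a * (z.1.1 ^ 2 + z.1.2 ^ 2)) = -(a * z.1.1 ^ 2) + -(a * z.1.2 ^ 2) from by ring,
          Real.exp_add]
        ring

lemma master {a : ℝ} (ha : 0 < a) {b1 b2 : ℝ} (hb : b1 ^ 2 + b2 ^ 2 ≠ 0) :
    (∫ x : ℝ × ℝ, (x.2 + b2) *
        ((1 - Real.exp (-(((x.1 + b1) ^ 2 + (x.2 + b2) ^ 2) * a))) /
          ((x.1 + b1) ^ 2 + (x.2 + b2) ^ 2)) * Real.exp (-(a * (x.1 ^ 2 + x.2 ^ 2))))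
      = π * b2 / a * ((1 - Real.exp (-(a * (b1 ^ 2 + b2 ^ 2) / 2))) / (b1 ^ 2 + b2 ^ 2)) := by
  have hr : 0 < b1 ^ 2 + b2 ^ 2 := lt_of_le_of_ne (by positivity) (Ne.symm hb)
  have hae : ∀ᵐ x : ℝ × ℝ, x ≠ (-b1, -b2) := by
    rw [ae_iff]
    have : {x : ℝ × ℝ | ¬ x ≠ (-b1, -b2)} = {((-b1 : ℝ), (-b2 : ℝ))} := by
      ext x; simp
    rw [this, MeasureTheory.Measure.volume_eq_prod,
      show ({((-b1 : ℝ), (-b2 : ℝ))} : Set (ℝ × ℝ)) = {(-b1 : ℝ)} ×ˢ {(-b2 : ℝ)} from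
        (Set.singleton_prod_singleton).symm,
      MeasureTheory.Measure.prod_prod, Real.volume_singleton, zero_mul]
  have step1 : (∫ x : ℝ × ℝ, (x.2 + b2) *
        ((1 - Real.exp (-(((x.1 + b1) ^ 2 + (x.2 + b2) ^ 2) * a))) /
          ((x.1 + b1) ^ 2 + (x.2 + b2) ^ 2)) * Real.exp (-(a * (x.1 ^ 2 + x.2 ^ 2))))
      = ∫ x : ℝ × ℝ, ∫ t in Ioc (0:ℝ) a, (x.2 + b2) *
          Real.exp (-(t * ((x.1 + b1) ^ 2 + (x.2 + b2) ^ 2) + a * (x.1 ^ 2 + x.2 ^ 2))) := by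
    apply integral_congr_ae
    filter_upwards [hae] with x hx
    have hS : 0 < (x.1 + b1) ^ 2 + (x.2 + b2) ^ 2 := by
      rcases lt_or_eq_of_le (by positivity : (0:ℝ) ≤ (x.1 + b1) ^ 2 + (x.2 + b2) ^ 2) with h | h
      · exact h
      · exfalso
        apply hx
        have h1 : x.1 + b1 = 0 := by nlinarith [sq_nonneg (x.1 + b1), sq_nonneg (x.2 + b2)]
        have h2 : x.2 + b2 = 0 := by nlinarith [sq_nonneg (x.1 + b1), sq_nonneg (x.2 + b2)]
        have : x = (x.1, x.2) := rfl
        rw [this, Prod.mk.injEq]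
        constructor <;> linarith
    have inner : ∀ t : ℝ, (x.2 + b2) *
        Real.exp (-(t * ((x.1 + b1) ^ 2 + (x.2 + b2) ^ 2) + a * (x.1 ^ 2 + x.2 ^ 2)))
        = ((x.2 + b2) * Real.exp (-(a * (x.1 ^ 2 + x.2 ^ 2)))) *
          Real.exp (-(((x.1 + b1) ^ 2 + (x.2 + b2) ^ 2) * t)) := by
      intro t
      rw [show -(t * ((x.1 + b1) ^ 2 + (x.2 + b2) ^ 2) + a * (x.1 ^ 2 + x.2 ^ 2))
          = -(a * (x.1 ^ 2 + x.2 ^ 2)) + -(((x.1 + b1) ^ 2 + (x.2 + b2) ^ 2) * t) from by ring,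
        Real.exp_add]
      ring
    simp_rw [inner]
    rw [MeasureTheory.integral_const_mul, trep hS ha.le]
    ring
  have step2 := MeasureTheory.integral_integral_swap
    (μ := (volume : Measure (ℝ × ℝ))) (ν := volume.restrict (Ioc (0:ℝ) a))
    (f := fun (x : ℝ × ℝ) (t : ℝ) => (x.2 + b2) *
      Real.exp (-(t * ((x.1 + b1) ^ 2 + (x.2 + b2) ^ 2) + a * (x.1 ^ 2 + x.2 ^ 2))))
    (G_integrable ha b1 b2)
  have step3 : (∫ t in Ioc (0:ℝ) a, ∫ x : ℝ × ℝ, (x.2 + b2) *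
        Real.exp (-(t * ((x.1 + b1) ^ 2 + (x.2 + b2) ^ 2) + a * (x.1 ^ 2 + x.2 ^ 2))))
      = ∫ t in Ioc (0:ℝ) a, π * b2 / a *
          (a ^ 2 / (a + t) ^ 2 * Real.exp (-(a * t / (a + t) * (b1 ^ 2 + b2 ^ 2)))) := by
    apply setIntegral_congr_fun measurableSet_Ioc
    intro t ht
    dsimp only
    rw [twoD ha ht.1.le b1 b2]
    have hat : a + t ≠ 0 := by have := ht.1; positivity
    field_simp
  rw [step1, step2, step3, MeasureTheory.integral_const_mul, outer ha hr]

end Aux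

/-- averaging the Lamb–Oseen velocity field of core size λ against a Gaussian
of core size λ gives the Lamb–Oseen velocity field of core size √2·λ. -/
theorem velocity_gaussian_convolution (lam : ℝ) (hlam : 0 < lam) (b : ℝ × ℝ) (hb : b ≠ 0) :
    (∫ x : ℝ × ℝ, V001 lam (x + b) * phi00 lam x) = V001 (Real.sqrt 2 * lam) b ∧
    (∫ x : ℝ × ℝ, V002 lam (x + b) * phi00 lam x) = V002 (Real.sqrt 2 * lam) b := by
  have hpi : (π : ℝ) ≠ 0 := Real.pi_ne_zero
  have hlam2 : (lam : ℝ) ^ 2 ≠ 0 := by positivity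
  have ha : (0:ℝ) < 1 / lam ^ 2 := by positivity
  have hr : b.1 ^ 2 + b.2 ^ 2 ≠ 0 := by
    intro h
    apply hb
    have h1 : b.1 = 0 := by nlinarith [sq_nonneg b.1, sq_nonneg b.2]
    have h2 : b.2 = 0 := by nlinarith [sq_nonneg b.1, sq_nonneg b.2]
    have : b = (b.1, b.2) := rfl
    rw [this, h1, h2]
    rfl
  have hrpos : 0 < b.1 ^ 2 + b.2 ^ 2 := lt_of_le_of_ne (by positivity) (Ne.symm hr)
  have hsq2 : ((Real.sqrt 2 * lam) ^ 2 : ℝ) = 2 * lam ^ 2 := by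
    rw [mul_pow, Real.sq_sqrt (by norm_num : (0:ℝ) ≤ 2)]
  constructor
  · have h1 : ∀ x : ℝ × ℝ, V001 lam (x + b) * phi00 lam x
        = (-(1 / (2 * π)) * (1 / (π * lam ^ 2))) * ((x.2 + b.2) *
          ((1 - Real.exp (-(((x.1 + b.1) ^ 2 + (x.2 + b.2) ^ 2) * (1 / lam ^ 2))))
            / ((x.1 + b.1) ^ 2 + (x.2 + b.2) ^ 2)) *
          Real.exp (-((1 / lam ^ 2) * (x.1 ^ 2 + x.2 ^ 2)))) := by
      intro x
      simp only [V001, phi00, Prod.fst_add, Prod.snd_add]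
      rw [show -((x.1 + b.1) ^ 2 + (x.2 + b.2) ^ 2) / lam ^ 2
          = -(((x.1 + b.1) ^ 2 + (x.2 + b.2) ^ 2) * (1 / lam ^ 2)) from by ring,
        show -(x.1 ^ 2 + x.2 ^ 2) / lam ^ 2
          = -((1 / lam ^ 2) * (x.1 ^ 2 + x.2 ^ 2)) from by ring]
      ring
    simp_rw [h1]
    rw [MeasureTheory.integral_const_mul, master ha hr]
    simp only [V001]
    rw [hsq2]
    rw [show -(b.1 ^ 2 + b.2 ^ 2) / (2 * lam ^ 2)
        = -((1 / lam ^ 2) * (b.1 ^ 2 + b.2 ^ 2) / 2) from by ring]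
    field_simp
  · have hswap : (∫ x : ℝ × ℝ, V002 lam (x + b) * phi00 lam x)
        = ∫ x : ℝ × ℝ, V002 lam (x.swap + b) * phi00 lam x.swap := by
      rw [MeasureTheory.Measure.volume_eq_prod]
      exact (MeasureTheory.integral_prod_swap
        (fun x : ℝ × ℝ => V002 lam (x + b) * phi00 lam x)).symm
    rw [hswap]
    have hr' : b.2 ^ 2 + b.1 ^ 2 ≠ 0 := by
      intro h; apply hr; linarith [h]
    have h2 : ∀ x : ℝ × ℝ, V002 lam (x.swap + b) * phi00 lam x.swap
        = ((1 / (2 * π)) * (1 / (π * lam ^ 2))) * ((x.2 + b.1) *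
          ((1 - Real.exp (-(((x.1 + b.2) ^ 2 + (x.2 + b.1) ^ 2) * (1 / lam ^ 2))))
            / ((x.1 + b.2) ^ 2 + (x.2 + b.1) ^ 2)) *
          Real.exp (-((1 / lam ^ 2) * (x.1 ^ 2 + x.2 ^ 2)))) := by
      intro x
      simp only [V002, phi00, Prod.fst_add, Prod.snd_add, Prod.fst_swap, Prod.snd_swap]
      rw [show -((x.2 + b.1) ^ 2 + (x.1 + b.2) ^ 2) / lam ^ 2
          = -(((x.1 + b.2) ^ 2 + (x.2 + b.1) ^ 2) * (1 / lam ^ 2)) from by ring,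
        show -(x.2 ^ 2 + x.1 ^ 2) / lam ^ 2
          = -((1 / lam ^ 2) * (x.1 ^ 2 + x.2 ^ 2)) from by ring,
        show (x.2 + b.1) ^ 2 + (x.1 + b.2) ^ 2
          = (x.1 + b.2) ^ 2 + (x.2 + b.1) ^ 2 from by ring]
      ring
    simp_rw [h2]
    rw [MeasureTheory.integral_const_mul, master ha hr']
    simp only [V002]
    rw [hsq2]
    rw [show -(b.1 ^ 2 + b.2 ^ 2) / (2 * lam ^ 2)
        = -((1 / lam ^ 2) * (b.2 ^ 2 + b.1 ^ 2) / 2) from by ring,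
      show b.1 ^ 2 + b.2 ^ 2 = b.2 ^ 2 + b.1 ^ 2 from by ring]
    field_simp
end

section
/- Let λ > 0 and let G₁(b) = (−b₂/(2π|b|²))(1 − e^{−|b|²/(2λ²)}) for b ∈ ℝ² \ {0}, extended smoothly by 0 at b = 0. Then for all nonnegative integers α₁, α₂, the mixed derivative ∂^{α₁}_{b₁} ∂^{α₂}_{b₂} G₁(b) evaluated at b = 0 equals (−1/(2π)) (1/(2λ²))^{(α₁+α₂+1)/2} ((−1)^{(α₁+α₂−1)/2}/((α₁+α₂+1)/2)!) C((α₁+α₂−1)/2, α₁/2) (α₁!)(α₂!) when α₁ is even and α₂ is odd, and equals 0 otherwise. -/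
open MeasureTheory Real
open FormalMultilinearSeries

/-- first component of , extended by 0 at the origin. -/
noncomputable def G1 (lam : ℝ) (b : ℝ × ℝ) : ℝ :=
  if b = 0 then 0
  else (-b.2 / (2 * π * (b.1 ^ 2 + b.2 ^ 2)))
    * (1 - Real.exp (-(b.1 ^ 2 + b.2 ^ 2) / (2 * lam ^ 2)))


/-- Build a power series ball of infinite radius from an everywhere-convergent scalar series. -/
lemma entA {d : ℕ → ℝ} {f : ℝ → ℝ} (h : ∀ x : ℝ, HasSum (fun n => d n * x ^ n) (f x)) :
    HasFPowerSeriesOnBall f (ofScalars ℝ d) 0 ⊤ := by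
  have hnorm : ∀ n, ‖ofScalars ℝ d n‖ ≤ |d n| := by
    intro n
    have h1 : ‖ofScalars ℝ d n‖ = ‖d n‖ * ‖ContinuousMultilinearMap.mkPiAlgebraFin ℝ n ℝ‖ := by
      rw [ofScalars]; exact norm_smul (d n) (ContinuousMultilinearMap.mkPiAlgebraFin ℝ n ℝ)
    rw [h1, ContinuousMultilinearMap.norm_mkPiAlgebraFin, mul_one]
    exact le_of_eq rfl
  have hrad : (ofScalars ℝ d).radius = ⊤ := by
    apply radius_eq_top_of_summable_norm
    intro r
    apply Summable.of_nonneg_of_le (fun n => by positivity) (fun n => ?_) ((h r).summable.abs)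
    calc ‖ofScalars ℝ d n‖ * (r : ℝ) ^ n ≤ |d n| * (r : ℝ) ^ n := by
          gcongr; exact hnorm n
      _ = |d n * (r : ℝ) ^ n| := by
          rw [abs_mul, abs_pow, abs_of_nonneg r.coe_nonneg]
  have key : ∀ y : ℝ, (fun n => (ofScalars ℝ d) n (fun _ => y)) = fun n => d n * y ^ n := by
    intro y; funext n; rw [ofScalars_apply_eq, smul_eq_mul]
  refine ⟨hrad.ge, by simp, fun {y} _ => ?_⟩
  rw [zero_add, key]
  exact h y

lemma entB {d : ℕ → ℝ} {f : ℝ → ℝ} (h : HasFPowerSeriesOnBall f (ofScalars ℝ d) 0 ⊤) (x : ℝ) :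
    HasSum (fun n => d n * x ^ n) (f x) := by
  have key : (fun n => (ofScalars ℝ d) n (fun _ => x)) = fun n => d n * x ^ n := by
    funext n; rw [ofScalars_apply_eq, smul_eq_mul]
  have h2 := h.hasSum (y := x) (by simp [EMetric.mem_ball, edist_lt_top])
  rw [zero_add, key] at h2
  exact h2

lemma entC {d : ℕ → ℝ} {f : ℝ → ℝ} (h : HasFPowerSeriesOnBall f (ofScalars ℝ d) 0 ⊤) (k : ℕ) :
    iteratedDeriv k f 0 = (k.factorial : ℝ) * d k := by
  have h1 := h.factorial_smul (1 : ℝ) k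
  rw [ofScalars_apply_eq] at h1
  rw [iteratedDeriv_eq_iteratedFDeriv, ← h1]
  simp [smul_eq_mul]

lemma entD {d : ℕ → ℝ} {f : ℝ → ℝ} (h : HasFPowerSeriesOnBall f (ofScalars ℝ d) 0 ⊤) (x y : ℝ) :
    HasSum (fun k => ((k.factorial : ℝ))⁻¹ * iteratedDeriv k f x * y ^ k) (f (x + y)) := by
  have h2 := h.changeOrigin (y := x) (by simp)
  rw [zero_add] at h2
  have h3 := h2.hasSum_iteratedFDeriv (y := y)
    (by simp [EMetric.mem_ball, ENNReal.top_sub_coe, edist_lt_top])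
  have he : (fun n => ((n.factorial : ℝ))⁻¹ • iteratedFDeriv ℝ n f x (fun _ => y))
      = fun k => ((k.factorial : ℝ))⁻¹ * iteratedDeriv k f x * y ^ k := by
    funext n
    rw [iteratedFDeriv_apply_eq_iteratedDeriv_mul_prod]
    simp only [Finset.prod_const, Finset.card_univ, Fintype.card_fin, smul_eq_mul]
    ring
  rwa [he] at h3

lemma entE {d : ℕ → ℝ} {f : ℝ → ℝ} (h : HasFPowerSeriesOnBall f (ofScalars ℝ d) 0 ⊤) (x : ℝ) :
    HasSum (fun n : ℕ => ((n : ℝ) + 1) * d (n + 1) * x ^ n) (deriv f x) := by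
  have hfd := h.fderiv
  rcases eq_or_ne x 0 with rfl | hx
  · have hd : deriv f 0 = d 1 := by
      have h1 := h.hasFPowerSeriesAt.deriv
      rw [h1]
      show (ofScalars ℝ d) 1 (fun _ => 1) = d 1
      rw [ofScalars_apply_eq, smul_eq_mul, one_pow, mul_one]
    have h0 : HasSum (fun n : ℕ => ((n : ℝ) + 1) * d (n + 1) * (0 : ℝ) ^ n)
        ((((0:ℕ) : ℝ) + 1) * d (0 + 1) * (0 : ℝ) ^ 0) :=
      hasSum_single 0 (fun b hb => by rw [zero_pow hb, mul_zero])
    simpa [hd] using h0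
  · have hs := hfd.hasSum (y := x) (by simp [EMetric.mem_ball, edist_lt_top])
    rw [zero_add] at hs
    have hs2 := (ContinuousLinearMap.apply ℝ ℝ (1 : ℝ)).hasSum hs
    have hde : (ContinuousLinearMap.apply ℝ ℝ (1 : ℝ)) (fderiv ℝ f x) = deriv f x := rfl
    rw [hde] at hs2
    have key : ∀ n : ℕ, (ContinuousLinearMap.apply ℝ ℝ (1 : ℝ))
        ((ofScalars ℝ d).derivSeries n (fun _ => x)) = ((n : ℝ) + 1) * d (n + 1) * x ^ n := by
      intro n
      have hdiag := (ofScalars ℝ d).derivSeries_apply_diag n x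
      rw [ofScalars_apply_eq, smul_eq_mul] at hdiag
      have hL : ((ofScalars ℝ d).derivSeries n (fun _ => x)) x
          = x * ((ofScalars ℝ d).derivSeries n (fun _ => x)) 1 := by
        have := ((ofScalars ℝ d).derivSeries n (fun _ => x)).map_smul x (1 : ℝ)
        simpa [smul_eq_mul] using this
      have hval : x * ((ofScalars ℝ d).derivSeries n (fun _ => x)) 1
          = ((n : ℝ) + 1) * (d (n + 1) * x ^ (n + 1)) := by
        rw [← hL, hdiag, nsmul_eq_mul]
        push_cast
        ring
      show ((ofScalars ℝ d).derivSeries n (fun _ => x)) 1 = ((n : ℝ) + 1) * d (n + 1) * x ^ n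
      have hval2 : x * ((ofScalars ℝ d).derivSeries n (fun _ => x)) 1
          = x * (((n : ℝ) + 1) * d (n + 1) * x ^ n) := hval.trans (by rw [pow_succ]; ring)
      exact mul_left_cancel₀ hx hval2
    have heq : (fun n => (ContinuousLinearMap.apply ℝ ℝ (1 : ℝ))
        ((ofScalars ℝ d).derivSeries n (fun _ => x)))
        = fun n : ℕ => ((n : ℝ) + 1) * d (n + 1) * x ^ n := funext key
    rwa [heq] at hs2

lemma entF {d : ℕ → ℝ} {f : ℝ → ℝ} (h : ∀ x : ℝ, HasSum (fun n => d n * x ^ n) (f x)) (l : ℕ) :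
    ∀ x : ℝ, HasSum (fun n => (((n + l).descFactorial l : ℝ) * d (n + l)) * x ^ n)
      (deriv^[l] f x) := by
  induction l with
  | zero =>
    intro x
    simpa using h x
  | succ l ih =>
    intro x
    have hE := entE (entA ih) x
    rw [Function.iterate_succ_apply']
    have heq : (fun n : ℕ => ((n : ℝ) + 1) * (((n + 1 + l).descFactorial l : ℝ) * d (n + 1 + l)) * x ^ n)
        = fun n : ℕ => (((n + (l + 1)).descFactorial (l + 1) : ℝ) * d (n + (l + 1))) * x ^ n := by
      funext n
      have h1 : (n + (l + 1)).descFactorial (l + 1) = (n + 1) * (n + 1 + l).descFactorial l := by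
        rw [show n + (l + 1) = n + 1 + l by omega, Nat.descFactorial_succ,
          show n + 1 + l - l = n + 1 by omega]
      rw [h1, show n + (l + 1) = n + 1 + l by omega]
      push_cast
      ring
    rwa [heq] at hE

noncomputable def qc (c : ℝ) : ℕ → ℝ :=
  fun m => (-1 / (2 * π)) * (-1) ^ m * c ^ (m + 1) / ((m + 1).factorial : ℝ)

noncomputable def Qf (c : ℝ) : ℝ → ℝ := fun r => ∑' m, qc c m * r ^ m

lemma Q_hasSum (c r : ℝ) : HasSum (fun m => qc c m * r ^ m) (Qf c r) := by
  have hsum : Summable (fun m => qc c m * r ^ m) := by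
    apply Summable.of_abs
    refine Summable.of_nonneg_of_le (fun n => abs_nonneg _) (fun m => ?_)
      ((Real.summable_pow_div_factorial (|c * r|)).mul_left (|c| / (2 * π)))
    have hpi : (0:ℝ) < 2 * π := by positivity
    have h1 : |qc c m * r ^ m| = (1 / (2 * π)) * (|c| ^ (m + 1) * |r| ^ m) / ((m + 1).factorial : ℝ) := by
      rw [abs_mul, abs_pow]
      rw [qc]
      rw [abs_div, abs_mul, abs_mul, abs_pow, abs_pow, abs_neg, abs_one, one_pow, mul_one,
        abs_div, abs_neg, abs_one, abs_of_pos hpi, abs_of_pos (by positivity : (0:ℝ) < ((m + 1).factorial : ℝ))]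
      ring
    rw [h1]
    have h2 : |c| ^ (m + 1) * |r| ^ m = |c| * |c * r| ^ m := by
      rw [abs_mul, mul_pow, pow_succ]; ring
    rw [h2]
    have h3 : (m.factorial : ℝ) ≤ ((m + 1).factorial : ℝ) := by
      exact_mod_cast Nat.factorial_le (Nat.le_succ m)
    have h4 : (0:ℝ) < (m.factorial : ℝ) := by positivity
    calc 1 / (2 * π) * (|c| * |c * r| ^ m) / (((m + 1).factorial : ℝ))
        ≤ 1 / (2 * π) * (|c| * |c * r| ^ m) / ((m.factorial : ℝ)) := by
          gcongr
      _ = |c| / (2 * π) * (|c * r| ^ m / (m.factorial : ℝ)) := by ring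
  exact hsum.hasSum

lemma Q_closed (c r : ℝ) (hr : r ≠ 0) :
    Qf c r = (-1 / (2 * π)) * (1 - Real.exp (-(c * r))) / r := by
  have h1 := (Q_hasSum c r).mul_left r
  have h3 : HasSum (fun m : ℕ => (-(c * r)) ^ m / (m.factorial : ℝ)) (Real.exp (-(c * r))) := by
    rw [Real.exp_eq_exp_ℝ]
    exact NormedSpace.expSeries_div_hasSum_exp (-(c * r))
  have h4 := (hasSum_nat_add_iff' 1).mpr h3
  have h5 := h4.mul_left (1 / (2 * π))
  have heq : (fun m : ℕ => r * (qc c m * r ^ m))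
      = fun m : ℕ => (1 / (2 * π)) * ((-(c * r)) ^ (m + 1) / ((m + 1).factorial : ℝ)) := by
    funext m
    rw [qc, show (-(c * r)) ^ (m + 1) = ((-1 : ℝ)) ^ m * (-1) * (c ^ (m + 1) * r ^ (m + 1)) by
      rw [neg_pow, mul_pow]; ring, pow_succ r]
    ring
  rw [heq] at h1
  have hval : r * Qf c r = (1 / (2 * π)) * (Real.exp (-(c * r)) - ∑ i ∈ Finset.range 1, (-(c * r)) ^ i / (i.factorial : ℝ)) :=
    h1.unique h5
  simp only [Finset.range_one, Finset.sum_singleton, pow_zero, Nat.factorial_zero, Nat.cast_one,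
    div_one] at hval
  have hval' : Qf c r * r = 1 / (2 * π) * (Real.exp (-(c * r)) - 1) := by
    rw [mul_comm]; exact hval
  have hfin : Qf c r = (1 / (2 * π) * (Real.exp (-(c * r)) - 1)) / r := (eq_div_iff hr).mpr hval'
  rw [hfin]
  ring

lemma pd2_iter (k : ℕ) (f : ℝ × ℝ → ℝ) (x : ℝ × ℝ) :
    pd2^[k] f x = iteratedDeriv k (fun t => f (x.1, t)) x.2 := by
  induction k generalizing f with
  | zero => simp
  | succ k ih =>
    rw [Function.iterate_succ_apply, ih (pd2 f), iteratedDeriv_succ']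
    have : (fun t => pd2 f (x.1, t)) = deriv (fun t => f (x.1, t)) := rfl
    rw [this]

lemma pd1_iter (k : ℕ) (f : ℝ × ℝ → ℝ) (x : ℝ × ℝ) :
    pd1^[k] f x = iteratedDeriv k (fun s => f (s, x.2)) x.1 := by
  induction k generalizing f with
  | zero => simp
  | succ k ih =>
    rw [Function.iterate_succ_apply, ih (pd1 f), iteratedDeriv_succ']
    have : (fun s => pd1 f (s, x.2)) = deriv (fun s => f (s, x.2)) := rfl
    rw [this]

lemma md_eq (a1 a2 : ℕ) (f : ℝ × ℝ → ℝ) :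
    md a1 a2 f 0 = iteratedDeriv a1 (fun s => iteratedDeriv a2 (fun t => f (s, t)) 0) 0 := by
  rw [md, pd1_iter]
  have h1 : (fun s => pd2^[a2] f (s, (0 : ℝ × ℝ).2))
      = fun s => iteratedDeriv a2 (fun t => f (s, t)) 0 := by
    funext s
    rw [pd2_iter a2 f (s, (0 : ℝ × ℝ).2)]
    rfl
  rw [h1]
  rfl

open FormalMultilinearSeries in
lemma G1_eq (lam : ℝ) (s t : ℝ) :
    G1 lam (s, t) = t * Qf (1 / (2 * lam ^ 2)) (s ^ 2 + t ^ 2) := by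
  by_cases hb : ((s, t) : ℝ × ℝ) = 0
  · have ht : t = 0 := congrArg Prod.snd hb
    rw [G1, if_pos hb, ht, zero_mul]
  · have h1 : s ≠ 0 ∨ t ≠ 0 := by
      by_contra hc
      push_neg at hc
      exact hb (by simp [Prod.ext_iff, hc.1, hc.2])
    have hst : (0:ℝ) < s ^ 2 + t ^ 2 := by
      rcases h1 with h | h
      · have h2 : 0 < s ^ 2 := lt_of_le_of_ne (sq_nonneg s) (Ne.symm (pow_ne_zero 2 h))
        nlinarith [sq_nonneg t]
      · have h2 : 0 < t ^ 2 := lt_of_le_of_ne (sq_nonneg t) (Ne.symm (pow_ne_zero 2 h))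
        nlinarith [sq_nonneg s]
    have hst' : s ^ 2 + t ^ 2 ≠ 0 := ne_of_gt hst
    rw [G1, if_neg hb, Q_closed _ _ hst']
    have hexp : -((s, t).1 ^ 2 + (s, t).2 ^ 2) / (2 * lam ^ 2)
        = -(1 / (2 * lam ^ 2) * (s ^ 2 + t ^ 2)) := by
      show -(s ^ 2 + t ^ 2) / (2 * lam ^ 2) = _
      ring
    rw [hexp]
    show -t / (2 * π * (s ^ 2 + t ^ 2)) * (1 - Real.exp (-(1 / (2 * lam ^ 2) * (s ^ 2 + t ^ 2))))
        = t * (-1 / (2 * π) * (1 - Real.exp (-(1 / (2 * lam ^ 2) * (s ^ 2 + t ^ 2)))) / (s ^ 2 + t ^ 2))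
    have hpi : (π : ℝ) ≠ 0 := Real.pi_ne_zero
    field_simp

open FormalMultilinearSeries in
lemma stage1 (lam : ℝ) (s t : ℝ) :
    HasSum (fun n => (if n % 2 = 1 then
        iteratedDeriv (n / 2) (Qf (1 / (2 * lam ^ 2))) (s ^ 2) / (((n / 2).factorial : ℝ))
      else 0) * t ^ n) (G1 lam (s, t)) := by
  have hQ := entA (Q_hasSum (1 / (2 * lam ^ 2)))
  have h1 := (entD hQ (s ^ 2) (t ^ 2)).mul_left t
  rw [G1_eq lam s t]
  have hinj : Function.Injective (fun k : ℕ => 2 * k + 1) := fun a b h => by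
    simpa using h
  rw [← Function.Injective.hasSum_iff hinj ?_]
  · have heq : ((fun n => (if n % 2 = 1 then
        iteratedDeriv (n / 2) (Qf (1 / (2 * lam ^ 2))) (s ^ 2) / (((n / 2).factorial : ℝ))
      else 0) * t ^ n) ∘ fun k => 2 * k + 1)
        = fun k => t * (((k.factorial : ℝ))⁻¹
            * iteratedDeriv k (Qf (1 / (2 * lam ^ 2))) (s ^ 2) * (t ^ 2) ^ k) := by
      funext k
      simp only [Function.comp_apply]
      rw [if_pos (by omega : (2 * k + 1) % 2 = 1), show (2 * k + 1) / 2 = k by omega,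
        show t ^ (2 * k + 1) = (t ^ 2) ^ k * t by rw [pow_succ, pow_mul]]
      ring
    rw [heq]
    exact h1
  · intro n hn
    have hodd : ¬ n % 2 = 1 := fun hcon => hn ⟨n / 2, by show 2 * (n / 2) + 1 = n; omega⟩
    rw [if_neg hodd, zero_mul]

/-- the mixed derivatives of  at the origin, i.e. the quantity
 of the paper. -/
theorem H1_derivative_formula (lam : ℝ) (hlam : 0 < lam) (a1 a2 : ℕ) :
    md a1 a2 (G1 lam) 0
      = if Even a1 ∧ Odd a2 then
          (-1 / (2 * π)) * (1 / (2 * lam ^ 2)) ^ ((a1 + a2 + 1) / 2)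
            * ((-1 : ℝ) ^ ((a1 + a2 - 1) / 2) / (Nat.factorial ((a1 + a2 + 1) / 2) : ℝ))
            * (Nat.choose ((a1 + a2 - 1) / 2) (a1 / 2) : ℝ)
            * (Nat.factorial a1 : ℝ) * (Nat.factorial a2 : ℝ)
        else 0 := by
  have hmd := md_eq a1 a2 (G1 lam)
  have hinner : ∀ s : ℝ, iteratedDeriv a2 (fun t => G1 lam (s, t)) 0
      = (a2.factorial : ℝ) * (if a2 % 2 = 1 then
          iteratedDeriv (a2 / 2) (Qf (1 / (2 * lam ^ 2))) (s ^ 2) / (((a2 / 2).factorial : ℝ))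
        else 0) :=
    fun s => entC (entA (fun t => stage1 lam s t)) a2
  rcases Nat.even_or_odd a2 with he | ho
  · -- a2 even : everything vanishes
    have h2 : ¬ a2 % 2 = 1 := by
      have := Nat.even_iff.mp he; omega
    have hzero : (fun s : ℝ => iteratedDeriv a2 (fun t => G1 lam (s, t)) 0)
        = fun _ : ℝ => (0 : ℝ) := by
      funext s
      rw [hinner s, if_neg h2, mul_zero]
    have hz2 : iteratedDeriv a1 (fun _ : ℝ => (0 : ℝ)) 0
        = (a1.factorial : ℝ) * (fun _ : ℕ => (0 : ℝ)) a1 :=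
      entC (entA (d := fun _ : ℕ => (0 : ℝ)) (fun x => by simpa using hasSum_zero)) a1
    rw [hmd, hzero, hz2, if_neg (fun h => (Nat.not_odd_iff_even.mpr he) h.2)]
    simp
  · obtain ⟨l, hl⟩ := ho
    have h2 : a2 % 2 = 1 := by omega
    have hdiv : a2 / 2 = l := by omega
    have hF : ∀ s : ℝ, HasSum (fun n => (if n % 2 = 0 then
          ((a2.factorial : ℝ) / (l.factorial : ℝ))
            * (((n / 2 + l).descFactorial l : ℝ) * qc (1 / (2 * lam ^ 2)) (n / 2 + l))
        else 0) * s ^ n) (iteratedDeriv a2 (fun t => G1 lam (s, t)) 0) := by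
      intro s
      have hQl := entF (Q_hasSum (1 / (2 * lam ^ 2))) l (s ^ 2)
      have h3 := hQl.mul_left ((a2.factorial : ℝ) / (l.factorial : ℝ))
      have hval : iteratedDeriv a2 (fun t => G1 lam (s, t)) 0
          = ((a2.factorial : ℝ) / (l.factorial : ℝ)) * (deriv^[l] (Qf (1 / (2 * lam ^ 2))) (s ^ 2)) := by
        rw [hinner s, if_pos h2, hdiv, ← iteratedDeriv_eq_iterate]
        ring
      rw [hval]
      have hinj : Function.Injective (fun k : ℕ => 2 * k) := fun a b h => by simpa using h
      rw [← Function.Injective.hasSum_iff hinj ?_]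
      · have heq : ((fun n => (if n % 2 = 0 then
              ((a2.factorial : ℝ) / (l.factorial : ℝ))
                * (((n / 2 + l).descFactorial l : ℝ) * qc (1 / (2 * lam ^ 2)) (n / 2 + l))
            else 0) * s ^ n) ∘ fun k => 2 * k)
            = fun k => ((a2.factorial : ℝ) / (l.factorial : ℝ))
                * ((((k + l).descFactorial l : ℝ) * qc (1 / (2 * lam ^ 2)) (k + l)) * (s ^ 2) ^ k) := by
          funext k
          simp only [Function.comp_apply]
          rw [if_pos (by omega : (2 * k) % 2 = 0), show (2 * k) / 2 = k by omega, ← pow_mul]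
          ring
        rw [heq]
        exact h3
      · intro n hn
        have h5 : ¬ n % 2 = 0 := fun hcon => hn ⟨n / 2, by show 2 * (n / 2) = n; omega⟩
        rw [if_neg h5, zero_mul]
    have hfinal := entC (entA hF) a1
    rw [hmd, hfinal]
    rcases Nat.even_or_odd a1 with he1 | ho1
    · obtain ⟨j, hj⟩ := he1
      have h4 : a1 % 2 = 0 := by omega
      have h5 : a1 / 2 = j := by omega
      rw [if_pos h4, h5]
      rw [if_pos (show Even a1 ∧ Odd a2 from ⟨⟨j, hj⟩, ⟨l, hl⟩⟩)]
      rw [show (a1 + a2 + 1) / 2 = j + l + 1 by omega,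
        show (a1 + a2 - 1) / 2 = j + l by omega, qc]
      have hch : ((j + l).descFactorial l : ℝ)
          = (l.factorial : ℝ) * (((j + l).choose j : ℕ) : ℝ) := by
        have hn : (j + l).descFactorial l = l.factorial * (j + l).choose j := by
          rw [Nat.descFactorial_eq_factorial_mul_choose]
          congr 1
          rw [← Nat.choose_symm (Nat.le_add_left l j), show j + l - l = j by omega]
        exact_mod_cast hn
      rw [hch]
      have hlf : (l.factorial : ℝ) ≠ 0 := by positivity
      have hjlf : (((j + l + 1).factorial : ℕ) : ℝ) ≠ 0 := by positivity
      have hpi : (π : ℝ) ≠ 0 := Real.pi_ne_zero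
      field_simp
    · have h4 : ¬ a1 % 2 = 0 := by
        have := Nat.odd_iff.mp ho1; omega
      rw [if_neg h4, mul_zero, if_neg (fun h => (Nat.not_odd_iff_even.mpr h.1) ho1)]
end
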